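/- Let B_0 = [[1,1],[0,1]], B_1 = [[2,2],[0,1]], B_2 = [[1,1],[0,2]], G = I_2, and let B̂_0 = [[1,0],[0,1]], B̂_1 = [[2,0],[0,1]], B̂_2 = [[1,0],[0,2]], Ĝ = [[1,−1],[0,1]]. Then for each k ∈ {0,1,2}, with H = G^{-1} and Ĥ = Ĝ^{-1}, we have H^T B_k^T B_k H = Ĥ^T B̂_k^T B̂_k Ĥ, even though B̂_0 is diagonal while B_0 is not. -/

import Mathlib

open Matrix

/-- Explicit 2×2 counterexample for non-generic soft interventions: the two
distinct parameterizations `(B₀,B₁,B₂,G)` and `(B̂₀,B̂₁,B̂₂,Ĝ)` produce the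
same precision matrices `Θ_k = Hᵀ B_kᵀ B_k H` (with `H = G⁻¹`, `Ĥ = Ĝ⁻¹`)
in all three contexts, even though `B̂₀` is diagonal while `B₀` is not. -/
theorem stmt19 :
    let B0 : Matrix (Fin 2) (Fin 2) ℝ := !![1, 1; 0, 1]
    let B1 : Matrix (Fin 2) (Fin 2) ℝ := !![2, 2; 0, 1]
    let B2 : Matrix (Fin 2) (Fin 2) ℝ := !![1, 1; 0, 2]
    let G : Matrix (Fin 2) (Fin 2) ℝ := 1
    let B0hat : Matrix (Fin 2) (Fin 2) ℝ := !![1, 0; 0, 1]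
    let B1hat : Matrix (Fin 2) (Fin 2) ℝ := !![2, 0; 0, 1]
    let B2hat : Matrix (Fin 2) (Fin 2) ℝ := !![1, 0; 0, 2]
    let Ghat : Matrix (Fin 2) (Fin 2) ℝ := !![1, -1; 0, 1]
    let H := G⁻¹
    let Hhat := Ghat⁻¹
    (Hᵀ * B0ᵀ * B0 * H = Hhatᵀ * B0hatᵀ * B0hat * Hhat) ∧
    (Hᵀ * B1ᵀ * B1 * H = Hhatᵀ * B1hatᵀ * B1hat * Hhat) ∧
    (Hᵀ * B2ᵀ * B2 * H = Hhatᵀ * B2hatᵀ * B2hat * Hhat) ∧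
    (B0hat 0 1 = 0 ∧ B0hat 1 0 = 0) ∧ B0 0 1 ≠ 0 := by
  intro B0 B1 B2 G B0hat B1hat B2hat Ghat H Hhat
  have hH : H = 1 := by simp [H, G]
  have hHhat : Hhat = !![1, 1; 0, 1] := by
    have : Ghat * !![1, 1; 0, 1] = 1 := by
      show (!![1, -1; 0, 1] : Matrix (Fin 2) (Fin 2) ℝ) * _ = 1
      ext i j
      fin_cases i <;> fin_cases j <;>
        simp [Matrix.mul_apply, Fin.sum_univ_succ, Matrix.one_apply]
    exact Matrix.inv_eq_right_inv this
  refine ⟨?_, ?_, ?_, ⟨rfl, rfl⟩, by norm_num [B0]⟩ <;>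
  · rw [hH, hHhat]
    ext i j
    fin_cases i <;> fin_cases j <;>
      simp [B0, B1, B2, B0hat, B1hat, B2hat, Matrix.mul_apply, Fin.sum_univ_succ,
        Matrix.transpose_apply, Matrix.one_apply]
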